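/- Let D > 1 be squarefree with √Δ > 2 (Δ the discriminant), c_j the complete quotients of ξ, and N_i the absolute norms of the convergent elements satisfying N_i = √Δ/c_{i+1} - N_{i-1}/c_{i+1}² with N_{-1} = 1. Then for every i ≥ 0, N_i > √Δ / (c_{i+1} + 1). -/

import Mathlib

/-- If moreover √Δ > 2, then (with `N (i+1)` playing the role of N_i, so
`N 0 = N_{-1} = 1`) for every i ≥ 0, N_i > √Δ / (c_{i+1} + 1). -/
theorem Ni_lower_bound_strong (Δ : ℝ) (hΔ : 0 < Δ) (hΔ2 : 2 < Real.sqrt Δ)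
    (u : ℕ → ℕ) (hu : ∀ j, 0 < u j)
    (c : ℕ → ℝ) (hc1 : ∀ j, 1 < c j)
    (hc : ∀ j, c j = u j + 1 / c (j + 1))
    (N : ℕ → ℝ) (hN0 : N 0 = 1)
    (hNrec : ∀ i, N (i + 1) = Real.sqrt Δ / c (i + 1) - N i / (c (i + 1)) ^ 2)
    (hNpos : ∀ i, 0 < N i) :
    ∀ i : ℕ, N (i + 1) > Real.sqrt Δ / (c (i + 1) + 1) := by
  intro i
  set s := Real.sqrt Δ with hs
  have hcpos : ∀ j, 0 < c j := fun j => lt_trans one_pos (hc1 j)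
  have hci := hcpos (i + 1)
  have hci1 := hc1 (i + 1)
  -- key estimate : N i * (c (i+1) + 1) < s * c (i+1)
  have key : N i * (c (i + 1) + 1) < s * c (i + 1) := by
    cases i with
    | zero =>
      rw [hN0, one_mul]
      nlinarith
    | succ j =>
      have hcj := hcpos (j + 1)
      have hcj2 := hcpos (j + 2)
      have h1 : N (j + 1) * c (j + 1) < s := by
        rw [hNrec j, sub_mul, div_mul_cancel₀ _ (ne_of_gt hcj)]
        have hjp := hNpos j
        have : 0 < N j / c (j + 1) ^ 2 * c (j + 1) := by positivity
        linarith
      have h2 : c (j + 1) * c (j + 2) ≥ c (j + 2) + 1 := by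
        have hu1 : (1 : ℝ) ≤ (u (j + 1) : ℝ) := by exact_mod_cast hu (j + 1)
        rw [hc (j + 1)]
        have : (1 / c (j + 2)) * c (j + 2) = 1 := by field_simp
        nlinarith
      -- N (j+1) * (c (j+2) + 1) ≤ N (j+1) * c (j+1) * c (j+2) < s * c (j+2)
      have hN1 := hNpos (j + 1)
      nlinarith
  rw [gt_iff_lt, div_lt_iff₀ (by linarith : (0:ℝ) < c (i + 1) + 1), hNrec i]
  have hNi := hNpos i
  have hc2 : (0:ℝ) < c (i + 1) ^ 2 := by positivity
  rw [← mul_lt_mul_iff_of_pos_right hc2]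
  have e : (s / c (i + 1) - N i / c (i + 1) ^ 2) * (c (i + 1) + 1) * c (i + 1) ^ 2
      = (s * c (i + 1) - N i) * (c (i + 1) + 1) := by
    field_simp
  rw [e]
  nlinarith [key]
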